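/- Let G be a group, A a set, M ⊆ G finite, and S = A^(A^M). For any s, t ∈ S^G with M a common memory, the composition σ_t ∘ σ_s is again a NUCA with memory M² = M·M; i.e., there exists u ∈ (A^(A^(M·M)))^G such that σ_t ∘ σ_s = σ_u. -/
import Mathlib


open Pointwise

/-- The NUCA with memory `M` and configuration of local defining maps `s`. -/
def nuca {G A : Type*} [Group G] (M : Set G) (s : G → (M → A) → A)
    (x : G → A) : G → A :=
  fun g => s g fun m => x (g * (m : G))

/-- The composition of two NUCA with memory `M` is a NUCA with memory `M * M`. -/
theorem stmt1 {G A : Type*} [Group G] (M : Set G) (hM : M.Finite)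
    (s t : G → (M → A) → A) :
    ∃ u : G → ((M * M : Set G) → A) → A,
      nuca M t ∘ nuca M s = nuca (M * M) u := by
  refine ⟨fun g y => t g (fun m => s (g * (m : G))
      (fun m' => y ⟨(m : G) * (m' : G), Set.mul_mem_mul m.2 m'.2⟩)), ?_⟩
  funext x g
  simp only [Function.comp_apply, nuca, mul_assoc]
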